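/- Let T be the group of finitary permutations of the positive integers. If (S_α)_{α∈Γ} is a family of subsemigroups of T, each containing the identity, whose union generates T as a semigroup, and such that st = ts whenever s ∈ S_α, t ∈ S_β with α ≠ β, then there exist α ∈ Γ and a positive integer k such that the orbit {σ(k) : σ ∈ S_α} is infinite. -/

import Mathlib

/-- `T`: the finitary permutations of the positive integers. -/
def Tfin : Set (Equiv.Perm ℕ+) := {σ | ∃ n : ℕ+, ∀ k : ℕ+, n < k → σ k = k}

/-- A permutation commuting with a transposition either fixes both points or swaps them. -/
lemma pairfix (t : Equiv.Perm ℕ+) (a b : ℕ+) (hab : a ≠ b)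
    (hc : Commute t (Equiv.swap a b)) :
    (t a = a ∧ t b = b) ∨ (t a = b ∧ t b = a) := by
  have h1 : ∀ x, t (Equiv.swap a b x) = Equiv.swap a b (t x) := by
    intro x
    have := DFunLike.congr_fun hc.eq x
    simpa [Equiv.Perm.mul_apply] using this
  have hb : t b = Equiv.swap a b (t a) := by
    have := h1 a; rwa [Equiv.swap_apply_left] at this
  by_cases h2 : t a = a
  · left; exact ⟨h2, by rw [hb, h2, Equiv.swap_apply_left]⟩
  by_cases h3 : t a = b
  · right; exact ⟨h3, by rw [hb, h3, Equiv.swap_apply_right]⟩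
  · exfalso
    rw [Equiv.swap_apply_of_ne_of_ne h2 h3] at hb
    exact hab (t.injective hb).symm

/-- If every factor of a noncommutative product either fixes or swaps `a, b`, then the
product fixes both or swaps them, and in the latter case some factor already sends `a` to `b`. -/
lemma extract_lemma {Γ : Type*} (A : Finset Γ) (F : Γ → Equiv.Perm ℕ+) (a b : ℕ+) :
    ∀ (c : (A : Set Γ).Pairwise (Function.onFun Commute F)),
    (∀ α ∈ A, (F α a = a ∧ F α b = b) ∨ (F α a = b ∧ F α b = a)) →
    ((A.noncommProd F c) a = a ∧ (A.noncommProd F c) b = b) ∨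
      ((A.noncommProd F c) a = b ∧ (A.noncommProd F c) b = a ∧ ∃ α ∈ A, F α a = b) := by
  induction A using Finset.cons_induction_on with
  | empty =>
    intro c hF
    left; simp [Finset.noncommProd_empty]
  | @cons x s hx ih =>
    intro c hF
    rw [Finset.noncommProd_cons]
    have hrest := ih (c.mono (by simp)) (fun α hα => hF α (Finset.mem_cons_of_mem hα))
    have hx' := hF x (Finset.mem_cons_self x s)
    rcases hrest with ⟨hqa, hqb⟩ | ⟨hqa, hqb, α, hα, hm⟩
    · rcases hx' with ⟨h2a, h2b⟩ | ⟨h2a, h2b⟩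
      · left
        constructor <;> simp [Equiv.Perm.mul_apply, hqa, hqb, h2a, h2b]
      · right
        refine ⟨?_, ?_, x, Finset.mem_cons_self x s, h2a⟩ <;>
          simp [Equiv.Perm.mul_apply, hqa, hqb, h2a, h2b]
    · rcases hx' with ⟨h2a, h2b⟩ | ⟨h2a, h2b⟩
      · right
        refine ⟨?_, ?_, α, Finset.mem_cons_of_mem hα, hm⟩ <;>
          simp [Equiv.Perm.mul_apply, hqa, hqb, h2a, h2b]
      · left
        constructor <;> simp [Equiv.Perm.mul_apply, hqa, hqb, h2a, h2b]

/-- A noncommutative product over a superset equals that over the support. -/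
lemma extend_lemma {Γ : Type*} [DecidableEq Γ] (F : Γ → Equiv.Perm ℕ+) (C A : Finset Γ)
    (hAC : A ⊆ C) (h1 : ∀ α ∉ A, F α = 1)
    (c : (C : Set Γ).Pairwise (Function.onFun Commute F)) :
    C.noncommProd F c = A.noncommProd F (c.mono (Finset.coe_subset.2 hAC)) := by
  erw [Finset.noncommProd_congr (Finset.union_sdiff_of_subset hAC).symm
    (fun x _ => rfl) c, Finset.noncommProd_union_of_disjoint Finset.disjoint_sdiff,
    Finset.noncommProd_eq_pow_card _ _ _ 1 (fun x hx => h1 x (Finset.mem_sdiff.mp hx).2),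
    one_pow, mul_one]

lemma swap_mem_Tfin (a b : ℕ+) : Equiv.swap a b ∈ Tfin := by
  refine ⟨a + b, fun k hk => Equiv.swap_apply_of_ne_of_ne ?_ ?_⟩ <;>
  · rintro rfl
    rw [← PNat.coe_lt_coe] at hk
    push_cast at hk
    omega

/-- If a family of subsemigroups of the group `T` of finitary
permutations, each containing the identity, has union generating `T` and elements from
distinct members commute, then some member has an infinite orbit on the positive
integers. -/
theorem stmt9 {Γ : Type*} (Ssub : Γ → Set (Equiv.Perm ℕ+))
    (hsub : ∀ α, Ssub α ⊆ Tfin)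
    (hid : ∀ α, 1 ∈ Ssub α)
    (hclosed : ∀ α, ∀ σ ∈ Ssub α, ∀ τ ∈ Ssub α, σ * τ ∈ Ssub α)
    (hgen : (Subsemigroup.closure (⋃ α, Ssub α) : Set (Equiv.Perm ℕ+)) = Tfin)
    (hcomm : ∀ α β, α ≠ β → ∀ s ∈ Ssub α, ∀ t ∈ Ssub β, s * t = t * s) :
    ∃ α, ∃ k : ℕ+, {m : ℕ+ | ∃ σ ∈ Ssub α, σ k = m}.Infinite := by
  classical
  -- commuting condition holds automatically for families of members
  have comm : ∀ (f : (α : Γ) → Ssub α) (A : Finset Γ),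
      (A : Set Γ).Pairwise (Function.onFun Commute fun α => ((f α : Equiv.Perm ℕ+))) := by
    intro f A a _ b _ hab
    show (f a : Equiv.Perm ℕ+) * (f b : Equiv.Perm ℕ+)
        = (f b : Equiv.Perm ℕ+) * (f a : Equiv.Perm ℕ+)
    exact hcomm a b hab _ (f a).2 _ (f b).2
  -- decomposition of any element of the closure as a commuting product
  have decomp : ∀ x ∈ Subsemigroup.closure (⋃ α, Ssub α),
      ∃ (A : Finset Γ) (f : (α : Γ) → Ssub α),
        (∀ α ∉ A, ((f α : Equiv.Perm ℕ+)) = 1) ∧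
        x = A.noncommProd (fun α => ((f α : Equiv.Perm ℕ+))) (comm f A) := by
    intro x hx
    induction hx using Subsemigroup.closure_induction with
    | mem x hx =>
      obtain ⟨_, ⟨α, rfl⟩, hxα⟩ := hx
      refine ⟨{α}, fun β => if h : β = α then ⟨x, by rw [h]; exact hxα⟩ else ⟨1, hid β⟩,
        ?_, ?_⟩
      · intro β hβ
        simp only [Finset.mem_singleton] at hβ
        simp [dif_neg hβ]
      · rw [Finset.noncommProd_singleton]
        simp
    | mul x y hx hy ihx ihy =>
      obtain ⟨A, f, hf1, hxe⟩ := ihx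
      obtain ⟨B, g, hg1, hye⟩ := ihy
      set F : Γ → Equiv.Perm ℕ+ := fun α => ((f α : Equiv.Perm ℕ+)) with hF
      set G : Γ → Equiv.Perm ℕ+ := fun α => ((g α : Equiv.Perm ℕ+)) with hG
      refine ⟨A ∪ B, fun α => ⟨F α * G α, hclosed α _ (f α).2 _ (g α).2⟩, ?_, ?_⟩
      · intro α hα
        have h1 : F α = 1 := hf1 α (fun h => hα (Finset.mem_union_left _ h))
        have h2 : G α = 1 := hg1 α (fun h => hα (Finset.mem_union_right _ h))
        show F α * G α = 1
        rw [h1, h2, mul_one]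
      · have step : (A ∪ B).noncommProd
            (fun α => (((⟨F α * G α, hclosed α _ (f α).2 _ (g α).2⟩ :
              Ssub α) : Equiv.Perm ℕ+)))
            (comm (fun α => ⟨F α * G α, hclosed α _ (f α).2 _ (g α).2⟩) (A ∪ B))
            = (A ∪ B).noncommProd F (comm f (A ∪ B)) *
              (A ∪ B).noncommProd G (comm g (A ∪ B)) :=
          Finset.noncommProd_mul_distrib F G (comm f (A ∪ B)) (comm g (A ∪ B))
            (fun a _ b _ hab =>
              hcomm a b hab _ (g a).2 _ (f b).2)
        rw [step, extend_lemma F (A ∪ B) A Finset.subset_union_left hf1,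
          extend_lemma G (A ∪ B) B Finset.subset_union_right hg1, hxe, hye]
  -- from a transposition, extract a single member moving `a` to `b`
  have getmover : ∀ a b : ℕ+, a ≠ b → ∃ α, ∃ t ∈ Ssub α, t a = b := by
    intro a b hab
    have hmem : Equiv.swap a b ∈ Subsemigroup.closure (⋃ α, Ssub α) := by
      have : Equiv.swap a b ∈ (Subsemigroup.closure (⋃ α, Ssub α) :
          Set (Equiv.Perm ℕ+)) := by rw [hgen]; exact swap_mem_Tfin a b
      exact this
    obtain ⟨A, f, hf1, hprod⟩ := decomp _ hmem
    set F : Γ → Equiv.Perm ℕ+ := fun α => ((f α : Equiv.Perm ℕ+)) with hF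
    have hpf : ∀ α ∈ A, (F α a = a ∧ F α b = b) ∨ (F α a = b ∧ F α b = a) := by
      intro α hα
      apply pairfix _ _ _ hab
      rw [hprod]
      refine Finset.noncommProd_commute _ _ _ _ (fun β hβ => ?_)
      by_cases h : α = β
      · subst h; exact Commute.refl _
      · exact hcomm α β h _ (f α).2 _ (f β).2
    have hext := extract_lemma A F a b (comm f A) hpf
    rw [← hprod] at hext
    rcases hext with ⟨h1, _⟩ | ⟨_, _, α, _, hm⟩
    · rw [Equiv.swap_apply_left] at h1
      exact absurd h1 (Ne.symm hab)
    · exact ⟨α, f α, (f α).2, hm⟩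
  -- get a member sending 1 to 2
  obtain ⟨α₀, s, hs, hs1⟩ := getmover 1 2 (by decide)
  obtain ⟨N, hN⟩ := hsub α₀ hs
  refine ⟨α₀, 1, ?_⟩
  have hsup : ∀ n : ℕ+, N < n → 2 < n → ∃ σ ∈ Ssub α₀, σ 1 = n := by
    intro n hn h2
    have h1n : (1 : ℕ+) ≠ n := ne_of_lt (lt_trans (by decide : (1 : ℕ+) < 2) h2)
    obtain ⟨β, t, ht, ht1⟩ := getmover 1 n h1n
    by_cases hβ : β = α₀
    · exact ⟨t, hβ ▸ ht, ht1⟩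
    · exfalso
      have hc := hcomm α₀ β (fun h => hβ h.symm) s hs t ht
      have he : s (t 1) = t (s 1) := by
        have := DFunLike.congr_fun hc (1 : ℕ+)
        simpa [Equiv.Perm.mul_apply] using this
      rw [ht1, hs1, hN n hn] at he
      have h12 : t 1 = t 2 := by rw [ht1, he]
      have : (1 : ℕ+) = 2 := t.injective h12
      exact absurd this (by decide)
  apply Set.infinite_of_injective_forall_mem
    (f := fun k : ℕ => N + 2 + k.succPNat)
  · intro a b hab
    have := congrArg PNat.val hab
    simp only [PNat.add_coe, Nat.succPNat_coe] at this
    omega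
  · intro k
    refine hsup _ ?_ ?_ <;>
    · rw [← PNat.coe_lt_coe]
      push_cast
      simp [Nat.succPNat]
      omega
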